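/- arXiv:1502.02386 — 2 statements merged into one kernel-verified Lean document; each statement's English description precedes it below -/
import Mathlib

section
/- Let ρ be a nonnegative Borel measure on ℝ, let α ∈ (0,2) and C̄ ≥ 0, and suppose that for every a > 0 one has ∫_{(−a,a)} |z|^2 ρ(dz) ≤ C̄ a^{2−α}. Then for every γ ∈ (α,2) and every a > 0, ∫_{[−a,a]} |z|^γ ρ(dz) ≤ C_{γ,α} C̄ a^{γ−α}, where C_{γ,α} = 2^{−γ+2} · 2^{2−α}/(2^{γ−α} − 1). -/
open MeasureTheory

/-- moment estimate for a Lévy-type measure under the small-jump condition. -/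
theorem statement1 (ρ : Measure ℝ) (α Cbar : ℝ)
    (hα : 0 < α) (hα2 : α < 2) (hCbar : 0 ≤ Cbar)
    (H : ∀ a : ℝ, 0 < a →
      ∫⁻ z in Set.Ioo (-a) a, ENNReal.ofReal (|z| ^ (2 : ℕ)) ∂ρ ≤
        ENNReal.ofReal (Cbar * a ^ (2 - α))) :
    ∀ γ : ℝ, α < γ → γ < 2 → ∀ a : ℝ, 0 < a →
      ∫⁻ z in Set.Icc (-a) a, ENNReal.ofReal (|z| ^ γ) ∂ρ ≤
        ENNReal.ofReal
          ((2 : ℝ) ^ (-γ + 2) * (2 : ℝ) ^ (2 - α) / ((2 : ℝ) ^ (γ - α) - 1) * Cbar *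
            a ^ (γ - α)) := by
  intro γ hγ1 hγ2 a ha
  have h2 : (0:ℝ) < 2 := two_pos
  -- Step 0: closed-interval version of the hypothesis, by a limiting argument.
  have lemA : ∀ c : ℝ, 0 < c →
      ∫⁻ z in Set.Icc (-c) c, ENNReal.ofReal (|z| ^ (2:ℕ)) ∂ρ ≤
        ENNReal.ofReal (Cbar * c ^ (2 - α)) := by
    intro c hc
    have hev : ∀ᶠ b in nhdsWithin c (Set.Ioi c),
        ∫⁻ z in Set.Icc (-c) c, ENNReal.ofReal (|z| ^ (2:ℕ)) ∂ρ ≤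
          ENNReal.ofReal (Cbar * b ^ (2 - α)) := by
      filter_upwards [self_mem_nhdsWithin] with b hb
      have hb' : c < b := hb
      refine le_trans (lintegral_mono_set ?_) (H b (hc.trans hb'))
      intro z hz
      exact ⟨by linarith [hz.1], by linarith [hz.2]⟩
    have hcont : Filter.Tendsto (fun b : ℝ => ENNReal.ofReal (Cbar * b ^ (2 - α)))
        (nhdsWithin c (Set.Ioi c)) (nhds (ENNReal.ofReal (Cbar * c ^ (2 - α)))) := by
      have h1 : ContinuousAt (fun b : ℝ => Cbar * b ^ (2 - α)) c :=
        continuousAt_const.mul (Real.continuousAt_rpow_const c (2 - α) (Or.inl hc.ne'))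
      exact (ENNReal.continuous_ofReal.continuousAt.comp h1).tendsto.mono_left
        nhdsWithin_le_nhds
    exact ge_of_tendsto hcont hev
  -- dyadic radii and annuli
  set c : ℕ → ℝ := fun n => a / 2 ^ n with hcdef
  have hcpos : ∀ n, 0 < c n := fun n => by positivity
  set A : ℕ → Set ℝ := fun n => {z : ℝ | c (n+1) < |z| ∧ |z| ≤ c n} with hAdef
  -- covering
  have hcover : Set.Icc (-a) a ⊆ {0} ∪ ⋃ n, A n := by
    intro z hz
    rcases eq_or_ne z 0 with rfl | hz0
    · exact Or.inl rfl
    right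
    have hzpos : 0 < |z| := abs_pos.mpr hz0
    have hza : |z| ≤ a := abs_le.mpr ⟨hz.1, hz.2⟩
    have hex : ∃ n : ℕ, c (n+1) < |z| := by
      obtain ⟨N, hN⟩ := exists_nat_gt (a / |z|)
      refine ⟨N, ?_⟩
      have hNp : (N:ℝ) < 2 ^ (N+1) := by
        have := Nat.lt_two_pow_self (n := N)
        have h1 : (N:ℝ) < 2 ^ N := by exact_mod_cast this
        have h2' : (2:ℝ) ^ N ≤ 2 ^ (N+1) := by
          apply pow_le_pow_right₀ (by norm_num)
          omega
        linarith
      have : a / |z| < 2 ^ (N+1) := hN.trans hNp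
      have : a < |z| * 2 ^ (N+1) := by
        rw [div_lt_iff₀ hzpos] at this
        linarith
      show a / 2 ^ (N+1) < |z|
      rw [div_lt_iff₀ (by positivity)]
      linarith
    refine Set.mem_iUnion.mpr ⟨Nat.find hex, Nat.find_spec hex, ?_⟩
    cases hn : Nat.find hex with
    | zero =>
        show |z| ≤ c 0
        simpa [hcdef] using hza
    | succ m =>
        have hmin : ¬ c (m+1) < |z| := Nat.find_min hex (by omega)
        exact le_of_not_gt hmin
  -- real-valued termwise bounds
  set t : ℕ → ℝ := fun n => (c (n+1)) ^ (γ - 2) * (Cbar * (c n) ^ (2 - α)) with htdef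
  have htnonneg : ∀ n, 0 ≤ t n := by
    intro n
    have := hcpos n
    have := hcpos (n+1)
    positivity
  -- termwise integral bound
  have term : ∀ n, ∫⁻ z in A n, ENNReal.ofReal (|z| ^ γ) ∂ρ ≤ ENNReal.ofReal (t n) := by
    intro n
    have h1 : ∫⁻ z in A n, ENNReal.ofReal (|z| ^ γ) ∂ρ ≤
        ∫⁻ z in A n, ENNReal.ofReal ((c (n+1)) ^ (γ - 2)) *
          ENNReal.ofReal (|z| ^ (2:ℕ)) ∂ρ := by
      refine setLIntegral_mono ?_ ?_
      · exact (measurable_const.mul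
          (ENNReal.measurable_ofReal.comp ((measurable_id.abs).pow_const 2)))
      · intro z hz
        have hz1 : c (n+1) < |z| := hz.1
        have hzpos : 0 < |z| := (hcpos (n+1)).trans hz1
        have hsplit : |z| ^ γ = |z| ^ (γ - 2) * |z| ^ (2:ℕ) := by
          rw [← Real.rpow_natCast |z| 2, ← Real.rpow_add hzpos]
          norm_num
        rw [hsplit, ENNReal.ofReal_mul (Real.rpow_nonneg hzpos.le _)]
        exact mul_le_mul_left (ENNReal.ofReal_le_ofReal
          (Real.rpow_le_rpow_of_nonpos (hcpos (n+1)) hz1.le (by linarith))) _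
    have h2' : ∫⁻ z in A n, ENNReal.ofReal ((c (n+1)) ^ (γ - 2)) *
          ENNReal.ofReal (|z| ^ (2:ℕ)) ∂ρ =
        ENNReal.ofReal ((c (n+1)) ^ (γ - 2)) *
          ∫⁻ z in A n, ENNReal.ofReal (|z| ^ (2:ℕ)) ∂ρ :=
      lintegral_const_mul' _ _ ENNReal.ofReal_ne_top
    have h3 : ∫⁻ z in A n, ENNReal.ofReal (|z| ^ (2:ℕ)) ∂ρ ≤
        ENNReal.ofReal (Cbar * (c n) ^ (2 - α)) := by
      refine le_trans (lintegral_mono_set ?_) (lemA (c n) (hcpos n))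
      intro z hz
      exact abs_le.mp hz.2
    calc ∫⁻ z in A n, ENNReal.ofReal (|z| ^ γ) ∂ρ
        ≤ _ := h1
      _ = ENNReal.ofReal ((c (n+1)) ^ (γ - 2)) *
          ∫⁻ z in A n, ENNReal.ofReal (|z| ^ (2:ℕ)) ∂ρ := h2'
      _ ≤ ENNReal.ofReal ((c (n+1)) ^ (γ - 2)) *
          ENNReal.ofReal (Cbar * (c n) ^ (2 - α)) := by gcongr
      _ = ENNReal.ofReal (t n) := by
          rw [← ENNReal.ofReal_mul (Real.rpow_nonneg (hcpos (n+1)).le _)]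
  -- geometric structure of t
  set r : ℝ := (2:ℝ) ^ (α - γ) with hrdef
  set K : ℝ := Cbar * (2:ℝ) ^ (2 - γ) * a ^ (γ - α) with hKdef
  have hr0 : 0 ≤ r := Real.rpow_nonneg h2.le _
  have hr1 : r < 1 :=
    Real.rpow_lt_one_of_one_lt_of_neg (by norm_num) (by linarith)
  have ht : ∀ n, t n = K * r ^ n := by
    intro n
    have hp : ∀ m : ℕ, c m = a * (2:ℝ) ^ (-(m:ℝ)) := by
      intro m
      rw [Real.rpow_neg h2.le, Real.rpow_natCast]
      simp [hcdef, div_eq_mul_inv]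
    have e1 : ∀ (m : ℕ) (p : ℝ), (c m) ^ p = a ^ p * (2:ℝ) ^ (-(m:ℝ) * p) := by
      intro m p
      rw [hp m, Real.mul_rpow ha.le (Real.rpow_nonneg h2.le _),
        ← Real.rpow_mul h2.le]
    rw [htdef]
    simp only [e1]
    have hrn : r ^ n = (2:ℝ) ^ ((α - γ) * n) := by
      rw [hrdef, ← Real.rpow_natCast ((2:ℝ) ^ (α - γ)) n, ← Real.rpow_mul h2.le]
    rw [hKdef, hrn]
    have hcast : (((n+1 : ℕ)):ℝ) = (n:ℝ) + 1 := by push_cast; ring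
    rw [hcast]
    calc a ^ (γ - 2) * (2:ℝ) ^ (-((n:ℝ) + 1) * (γ - 2)) *
          (Cbar * (a ^ (2 - α) * (2:ℝ) ^ (-(n:ℝ) * (2 - α))))
        = Cbar * (a ^ (γ - 2) * a ^ (2 - α)) *
            ((2:ℝ) ^ (-((n:ℝ) + 1) * (γ - 2)) * (2:ℝ) ^ (-(n:ℝ) * (2 - α))) := by ring
      _ = Cbar * a ^ (γ - α) *
            ((2:ℝ) ^ ((2 - γ) + (α - γ) * (n:ℝ))) := by
            rw [← Real.rpow_add ha, ← Real.rpow_add h2,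
              show (γ - 2) + (2 - α) = γ - α by ring,
              show -((n:ℝ) + 1) * (γ - 2) + -(n:ℝ) * (2 - α)
                = (2 - γ) + (α - γ) * (n:ℝ) by ring]
      _ = Cbar * (2:ℝ) ^ (2 - γ) * a ^ (γ - α) * (2:ℝ) ^ ((α - γ) * (n:ℝ)) := by
            rw [Real.rpow_add h2]
            ring
  -- summing up
  have hsummable : Summable t := by
    have : Summable (fun n : ℕ => K * r ^ n) :=
      (summable_geometric_of_lt_one hr0 hr1).mul_left K
    exact this.congr fun n => (ht n).symm
  have hsum : ∑' n, ENNReal.ofReal (t n) = ENNReal.ofReal (K * (1 - r)⁻¹) := by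
    rw [← ENNReal.ofReal_tsum_of_nonneg htnonneg hsummable]
    congr 1
    calc ∑' n, t n = ∑' n : ℕ, K * r ^ n := tsum_congr ht
      _ = K * ∑' n : ℕ, r ^ n := tsum_mul_left
      _ = K * (1 - r)⁻¹ := by rw [tsum_geometric_of_lt_one hr0 hr1]
  -- final real inequality
  have hxgt : (1:ℝ) < (2:ℝ) ^ (γ - α) :=
    Real.one_lt_rpow_iff_of_pos h2 |>.mpr (Or.inl ⟨by norm_num, by linarith⟩)
  have hfinal : K * (1 - r)⁻¹ ≤
      (2:ℝ) ^ (-γ + 2) * (2:ℝ) ^ (2 - α) / ((2:ℝ) ^ (γ - α) - 1) * Cbar *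
        a ^ (γ - α) := by
    set x : ℝ := (2:ℝ) ^ (γ - α) with hxdef
    have hxpos : (0:ℝ) < x - 1 := by linarith
    have hrx : r = x⁻¹ := by
      rw [hrdef, hxdef, ← Real.rpow_neg h2.le]
      norm_num
    have hinv : (1 - r)⁻¹ = x / (x - 1) := by
      rw [hrx]
      rw [show 1 - x⁻¹ = (x - 1) / x by field_simp]
      rw [inv_div]
    have hkey : x ≤ (2:ℝ) ^ (2 - α) :=
      Real.rpow_le_rpow_of_exponent_le one_le_two (by linarith)
    have hexp : (-γ + 2 : ℝ) = 2 - γ := by ring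
    rw [hinv, hKdef, hexp]
    have hpow1 : (0:ℝ) < (2:ℝ) ^ (2 - γ) := Real.rpow_pos_of_pos h2 _
    have hpowa : (0:ℝ) < a ^ (γ - α) := Real.rpow_pos_of_pos ha _
    rw [show Cbar * (2:ℝ) ^ (2 - γ) * a ^ (γ - α) * (x / (x - 1))
        = Cbar * (2:ℝ) ^ (2 - γ) * a ^ (γ - α) * x / (x - 1) by ring,
      show (2:ℝ) ^ (2 - γ) * (2:ℝ) ^ (2 - α) / ((2:ℝ) ^ (γ - α) - 1) * Cbar * a ^ (γ - α)
        = Cbar * (2:ℝ) ^ (2 - γ) * a ^ (γ - α) * (2:ℝ) ^ (2 - α) / (x - 1) by rw [← hxdef]; ring]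
    gcongr
  -- put everything together
  calc ∫⁻ z in Set.Icc (-a) a, ENNReal.ofReal (|z| ^ γ) ∂ρ
      ≤ ∫⁻ z in ({0} ∪ ⋃ n, A n : Set ℝ), ENNReal.ofReal (|z| ^ γ) ∂ρ :=
        lintegral_mono_set hcover
    _ ≤ (∫⁻ z in ({0} : Set ℝ), ENNReal.ofReal (|z| ^ γ) ∂ρ) +
          ∫⁻ z in (⋃ n, A n), ENNReal.ofReal (|z| ^ γ) ∂ρ :=
        lintegral_union_le _ _ _
    _ = ∫⁻ z in (⋃ n, A n), ENNReal.ofReal (|z| ^ γ) ∂ρ := by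
        have h0 : ∫⁻ z in ({0} : Set ℝ), ENNReal.ofReal (|z| ^ γ) ∂ρ = 0 := by
          have : ∫⁻ z in ({0} : Set ℝ), ENNReal.ofReal (|z| ^ γ) ∂ρ =
              ∫⁻ _ in ({0} : Set ℝ), 0 ∂ρ := by
            refine setLIntegral_congr_fun (measurableSet_singleton 0) ?_
            intro z hz
            rw [Set.mem_singleton_iff] at hz
            subst hz
            simp [Real.zero_rpow (by linarith : γ ≠ 0)]
          rw [this, lintegral_zero]
        rw [h0, zero_add]
    _ ≤ ∑' n, ∫⁻ z in A n, ENNReal.ofReal (|z| ^ γ) ∂ρ := lintegral_iUnion_le _ _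
    _ ≤ ∑' n, ENNReal.ofReal (t n) := ENNReal.tsum_le_tsum term
    _ = ENNReal.ofReal (K * (1 - r)⁻¹) := hsum
    _ ≤ _ := ENNReal.ofReal_le_ofReal hfinal
end

section
/- Let ρ be a nonnegative Borel measure on ℝ, let α ∈ (0,2), and let C_0, C̄ ≥ 0 be constants such that for every a > 0 one has ρ({z : |z| ≥ a}) ≤ C_0 a^{−α} and ∫_{(−a,a)} |z|^2 ρ(dz) ≤ C̄ a^{2−α}. Then for every ξ ∈ ℝ with ξ ≠ 0, ∫_ℝ (1 − cos(ξ z)) ρ(dz) ≤ 2 (C̄ + C_0) |ξ|^α. -/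
open MeasureTheory

/-- upper bound on the real part of the characteristic exponent,
`∫ (1 − cos(ξz)) ρ(dz) ≤ 2(C̄ + C₀)|ξ|^α`. -/
theorem statement9 (ρ : Measure ℝ) (α C0 Cbar : ℝ)
    (hα : 0 < α) (hα2 : α < 2) (hC0 : 0 ≤ C0) (hCbar : 0 ≤ Cbar)
    (H1 : ∀ a : ℝ, 0 < a → ρ {z : ℝ | a ≤ |z|} ≤ ENNReal.ofReal (C0 * a ^ (-α)))
    (H2 : ∀ a : ℝ, 0 < a →
      ∫⁻ z in Set.Ioo (-a) a, ENNReal.ofReal (|z| ^ (2 : ℕ)) ∂ρ ≤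
        ENNReal.ofReal (Cbar * a ^ (2 - α))) :
    ∀ ξ : ℝ, ξ ≠ 0 →
      ∫⁻ z, ENNReal.ofReal (1 - Real.cos (ξ * z)) ∂ρ ≤
        ENNReal.ofReal (2 * (Cbar + C0) * |ξ| ^ α) := by
  intro ξ hξ
  set m : ℝ := |ξ| with hm
  have hm0 : 0 < m := abs_pos.mpr hξ
  set a : ℝ := m⁻¹ with ha
  have ha0 : 0 < a := inv_pos.mpr hm0
  have hmeas : MeasurableSet (Set.Ioo (-a) a) := measurableSet_Ioo
  have hsplit := lintegral_add_compl (fun z => ENNReal.ofReal (1 - Real.cos (ξ * z))) hmeas (μ := ρ)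
  rw [← hsplit]
  -- inner part
  have h1 : ∫⁻ z in Set.Ioo (-a) a, ENNReal.ofReal (1 - Real.cos (ξ * z)) ∂ρ ≤
      ENNReal.ofReal (ξ ^ 2 / 2) * ENNReal.ofReal (Cbar * a ^ (2 - α)) := by
    calc ∫⁻ z in Set.Ioo (-a) a, ENNReal.ofReal (1 - Real.cos (ξ * z)) ∂ρ
        ≤ ∫⁻ z in Set.Ioo (-a) a, ENNReal.ofReal (ξ ^ 2 / 2) * ENNReal.ofReal (|z| ^ (2 : ℕ)) ∂ρ := by
          refine lintegral_mono fun z => ?_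
          rw [← ENNReal.ofReal_mul (by positivity)]
          refine ENNReal.ofReal_le_ofReal ?_
          have := Real.one_sub_sq_div_two_le_cos (x := ξ * z)
          have h2 : (ξ * z) ^ 2 = ξ ^ 2 * |z| ^ 2 := by
            rw [mul_pow, sq_abs]
          nlinarith [this]
      _ = ENNReal.ofReal (ξ ^ 2 / 2) * ∫⁻ z in Set.Ioo (-a) a, ENNReal.ofReal (|z| ^ (2 : ℕ)) ∂ρ := by
          rw [lintegral_const_mul' _ _ ENNReal.ofReal_ne_top]
      _ ≤ ENNReal.ofReal (ξ ^ 2 / 2) * ENNReal.ofReal (Cbar * a ^ (2 - α)) :=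
          mul_le_mul_right (H2 a ha0) _
  -- outer part
  have hcompl : (Set.Ioo (-a) a)ᶜ = {z : ℝ | a ≤ |z|} := by
    ext z
    simp only [Set.mem_compl_iff, Set.mem_Ioo, not_and_or, not_lt, Set.mem_setOf_eq, le_abs]
    constructor
    · rintro (h | h)
      · right; linarith
      · left; exact h
    · rintro (h | h)
      · right; exact h
      · left; linarith
  have h2 : ∫⁻ z in (Set.Ioo (-a) a)ᶜ, ENNReal.ofReal (1 - Real.cos (ξ * z)) ∂ρ ≤
      2 * ENNReal.ofReal (C0 * a ^ (-α)) := by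
    calc ∫⁻ z in (Set.Ioo (-a) a)ᶜ, ENNReal.ofReal (1 - Real.cos (ξ * z)) ∂ρ
        ≤ ∫⁻ _ in (Set.Ioo (-a) a)ᶜ, (2 : ENNReal) ∂ρ := by
          refine lintegral_mono fun z => ?_
          have : (2 : ENNReal) = ENNReal.ofReal 2 := by norm_num
          rw [this]
          refine ENNReal.ofReal_le_ofReal ?_
          have := Real.neg_one_le_cos (ξ * z)
          linarith
      _ = 2 * ρ (Set.Ioo (-a) a)ᶜ := by rw [lintegral_const, Measure.restrict_apply MeasurableSet.univ, Set.univ_inter]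
      _ ≤ 2 * ENNReal.ofReal (C0 * a ^ (-α)) := by
          rw [hcompl]; exact mul_le_mul_right (H1 a ha0) _
  refine le_trans (add_le_add h1 h2) ?_
  -- arithmetic
  have key : ξ ^ 2 / 2 * (Cbar * a ^ (2 - α)) + 2 * (C0 * a ^ (-α)) ≤
      2 * (Cbar + C0) * m ^ α := by
    have hxi : ξ ^ 2 = m ^ (2 : ℕ) := by
      rw [hm, sq_abs]
    have h1' : a ^ (2 - α) = m ^ (α - 2) := by
      rw [ha, Real.inv_rpow hm0.le, ← Real.rpow_neg hm0.le]
      congr 1; ring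
    have h2' : a ^ (-α) = m ^ α := by
      rw [ha, Real.inv_rpow hm0.le, ← Real.rpow_neg hm0.le, neg_neg]
    rw [hxi, h1', h2']
    have hmm : m ^ (2:ℕ) * m ^ (α - 2) = m ^ α := by
      rw [← Real.rpow_natCast m 2, ← Real.rpow_add hm0]
      norm_num
    have hma : 0 ≤ m ^ α := Real.rpow_nonneg hm0.le α
    have e : m ^ (2:ℕ) / 2 * (Cbar * m ^ (α - 2)) = Cbar / 2 * m ^ α := by
      rw [← hmm]; ring
    rw [e]
    nlinarith [mul_nonneg hCbar hma, mul_nonneg hC0 hma]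
  calc ENNReal.ofReal (ξ ^ 2 / 2) * ENNReal.ofReal (Cbar * a ^ (2 - α)) +
        2 * ENNReal.ofReal (C0 * a ^ (-α))
      = ENNReal.ofReal (ξ ^ 2 / 2 * (Cbar * a ^ (2 - α)) + 2 * (C0 * a ^ (-α))) := by
        rw [← ENNReal.ofReal_mul (by positivity), ENNReal.ofReal_add (by positivity) (by positivity),
          ENNReal.ofReal_mul (by norm_num : (0:ℝ) ≤ 2), ENNReal.ofReal_ofNat]
    _ ≤ ENNReal.ofReal (2 * (Cbar + C0) * m ^ α) := ENNReal.ofReal_le_ofReal key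
end
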